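/- arXiv:1811.02236 — 3 statements merged into one kernel-verified Lean document; each statement's English description precedes it below -/
import Mathlib

section
/- If μ is a finite Borel measure on ℝ² that charges no line and f is a spherical transform whose domain of definition contains supp μ, then ℓ_μ = ℓ_ν where ν = μ ∘ f⁻¹ is the pushforward of μ under f; that is, p(ω,μ) = p(ω,ν) for every order type ω. -/
open MeasureTheory Filter Topology
open scoped ENNReal NNReal

noncomputable section

/-- Points of the plane. -/
abbrev Pt : Type := ℝ × ℝ

/-- The orientation of a triple of points: the sign of `det (q - p, r - p)`. -/
noncomputable def chi (p q r : Pt) : ℝ :=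
  Real.sign ((q.1 - p.1) * (r.2 - p.2) - (q.2 - p.2) * (r.1 - p.1))

/-- A tuple of points is in general position: pairwise distinct and no aligned triple. -/
def InGenPos {n : ℕ} (P : Fin n → Pt) : Prop :=
  Function.Injective P ∧
    ∀ i j k : Fin n, i ≠ j → j ≠ k → i ≠ k → chi (P i) (P j) (P k) ≠ 0

/-- Two tuples of points have the same order type: some relabelling preserves all
orientations. -/
def sameOT {n : ℕ} (P Q : Fin n → Pt) : Prop :=
  ∃ σ : Equiv.Perm (Fin n),
    ∀ i j k : Fin n, chi (P i) (P j) (P k) = chi (Q (σ i)) (Q (σ j)) (Q (σ k))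

/-- `sameOT` as a setoid on configurations in general position. -/
def OTSetoid (n : ℕ) : Setoid {P : Fin n → Pt // InGenPos P} where
  r P Q := sameOT P.1 Q.1
  iseqv := by
    constructor
    · intro P; exact ⟨Equiv.refl _, fun i j k => rfl⟩
    · rintro P Q ⟨σ, h⟩
      refine ⟨σ.symm, fun i j k => ?_⟩
      have := (h (σ.symm i) (σ.symm j) (σ.symm k)).symm
      simpa using this
    · rintro P Q R ⟨σ, h⟩ ⟨τ, h'⟩
      exact ⟨σ.trans τ, fun i j k => (h i j k).trans (h' (σ i) (σ j) (σ k))⟩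

/-- Order types of size `n`. -/
abbrev PtOrderType (n : ℕ) : Type := Quotient (OTSetoid n)

/-- The set of all order types. -/
abbrev OT : Type := (n : ℕ) × PtOrderType n

/-- A canonical realization of an order type. -/
noncomputable def realization {n : ℕ} (ω : PtOrderType n) : Fin n → Pt :=
  (Quotient.out ω).1

/-- `P` is a point configuration realizing the order type `ω`. -/
def RealizesOT {n : ℕ} (P : Fin n → Pt) (ω : PtOrderType n) : Prop :=
  ∃ h : InGenPos P, Quotient.mk (OTSetoid n) ⟨P, h⟩ = ω

/-- The density `p(ω, ω')` of an order type `ω` in an order type `ω'`: the probability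
that `|ω|` points chosen uniformly at random from a realization of `ω'` have order
type `ω`. -/
noncomputable def density {k n : ℕ} (ω : PtOrderType k) (ω' : PtOrderType n) : ℝ :=
  (Nat.card {s : Fin k ↪ Fin n // sameOT (realization ω) (fun i => realization ω' (s i))} : ℝ) /
    (Nat.card (Fin k ↪ Fin n) : ℝ)

/-- Density, seen on the set of all order types. -/
noncomputable def densityOT (ω ω' : OT) : ℝ := density ω.2 ω'.2

/-- `ℓ : OT → ℝ` is a limit of order types: there is a sequence of order types whose
sizes tend to infinity and whose densities converge pointwise to `ℓ`. -/
def IsOTLimit (ℓ : OT → ℝ) : Prop :=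
  ∃ ωs : ℕ → OT,
    Tendsto (fun n => (ωs n).1) atTop atTop ∧
    ∀ ω : OT, Tendsto (fun n => densityOT ω (ωs n)) atTop (nhds (ℓ ω))

/-- Normalization of a measure to a (sub)probability measure `μ / μ(ℝ²)`. -/
noncomputable def mnormalize (μ : Measure Pt) : Measure Pt :=
  ((μ Set.univ)⁻¹).toNNReal • μ

instance mnormalize.isFiniteMeasure (μ : Measure Pt) : IsFiniteMeasure (mnormalize μ) := by
  constructor
  simp only [mnormalize, Measure.smul_apply, smul_eq_mul, ENNReal.smul_def]
  rcases eq_or_ne (μ Set.univ) 0 with h | h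
  · simp [h]
  rcases eq_or_ne (μ Set.univ) ⊤ with h' | h'
  · simp [h']
  · rw [ENNReal.coe_toNNReal (ENNReal.inv_ne_top.mpr h), ENNReal.inv_mul_cancel h h']
    exact ENNReal.one_lt_top

/-- The set of configurations realizing a given order type. -/
def OTSet {n : ℕ} (ω : PtOrderType n) : Set (Fin n → Pt) :=
  {P | RealizesOT P ω}

/-- `ℓ_μ(ω)`: the probability that `|ω|` points sampled independently from `μ / μ(ℝ²)`
are in general position and have order type `ω`. -/
noncomputable def ellMu {n : ℕ} (ω : PtOrderType n) (μ : Measure Pt) : ℝ :=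
  ((Measure.pi fun _ : Fin n => mnormalize μ) (OTSet ω)).toReal

/-- Affine lines of the plane. -/
def IsAffineLine (L : Set Pt) : Prop :=
  ∃ p v : Pt, v ≠ 0 ∧ L = {x | ∃ t : ℝ, x = p + t • v}

/-- A measure charges no line. -/
def ChargesNoLine (μ : Measure Pt) : Prop :=
  ∀ L : Set Pt, IsAffineLine L → μ L = 0

/-- The (topological) support of a measure on the plane. -/
def msupport (μ : Measure Pt) : Set Pt :=
  {x | ∀ U : Set Pt, IsOpen U → x ∈ U → 0 < μ U}

/-- A set of points is in convex position: in general position, and every point is an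
extreme point of the convex hull. -/
def ConvexPosSet (S : Set Pt) : Prop :=
  (∀ p q r : Pt, p ∈ S → q ∈ S → r ∈ S → p ≠ q → q ≠ r → p ≠ r → chi p q r ≠ 0) ∧
    ∀ p ∈ S, p ∈ Set.extremePoints ℝ (convexHull ℝ S)


/-- The standard identification of the plane with the open upper hemisphere. -/
noncomputable def iota (p : Pt) : Fin 3 → ℝ :=
  (Real.sqrt (p.1 ^ 2 + p.2 ^ 2 + 1))⁻¹ • ![p.1, p.2, 1]

/-- The inverse identification, from the open upper hemisphere back to the plane. -/
noncomputable def invIota (u : Fin 3 → ℝ) : Pt := (u 0 / u 2, u 1 / u 2)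

/-- The affine map on the plane with linear part `A` and translation part `c`. -/
noncomputable def affApply (A : Matrix (Fin 2) (Fin 2) ℝ) (c : Pt) (p : Pt) : Pt :=
  (A 0 0 * p.1 + A 0 1 * p.2 + c.1, A 1 0 * p.1 + A 1 1 * p.2 + c.2)

/-- `f` is a spherical transform defined (at least) on `X`: on `X` it agrees with
`g ∘ ι⁻¹ ∘ h ∘ ι` for a direct affine transform `g` and a rotation `h ∈ SO(3)` that
keeps the image of `ι(X)` in the open upper hemisphere. -/
def IsSphericalTransformOn (f : Pt → Pt) (X : Set Pt) : Prop :=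
  ∃ (A : Matrix (Fin 2) (Fin 2) ℝ) (c : Pt) (h : Matrix (Fin 3) (Fin 3) ℝ),
    0 < A.det ∧ h.transpose * h = 1 ∧ h.det = 1 ∧
    (∀ p ∈ X, 0 < h.mulVec (iota p) 2) ∧
    ∀ p ∈ X, f p = affApply A c (invIota (h.mulVec (iota p)))


/-! ### Auxiliary lemmas -/

section Aux

/-- raw determinant whose sign is chi -/
private def D3 (p q r : Pt) : ℝ := (q.1 - p.1) * (r.2 - p.2) - (q.2 - p.2) * (r.1 - p.1)

private lemma chi_eq_sign (p q r : Pt) : chi p q r = Real.sign (D3 p q r) := rfl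

/-- 3x3 determinant of rows -/
private def Ddet (u v w : Fin 3 → ℝ) : ℝ :=
  u 0 * (v 1 * w 2 - v 2 * w 1) - u 1 * (v 0 * w 2 - v 2 * w 0) + u 2 * (v 0 * w 1 - v 1 * w 0)

private lemma sign_pos_mul {c : ℝ} (hc : 0 < c) (x : ℝ) :
    Real.sign (c * x) = Real.sign x := by
  rcases lt_trichotomy x 0 with h | h | h
  · rw [Real.sign_of_neg h, Real.sign_of_neg (mul_neg_of_pos_of_neg hc h)]
  · simp [h]
  · rw [Real.sign_of_pos h, Real.sign_of_pos (mul_pos hc h)]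

private lemma D3_aff (A : Matrix (Fin 2) (Fin 2) ℝ) (c : Pt) (p q r : Pt) :
    D3 (affApply A c p) (affApply A c q) (affApply A c r) = A.det * D3 p q r := by
  simp only [D3, affApply, Matrix.det_fin_two]; ring

private lemma D3_invIota (u v w : Fin 3 → ℝ) (hu : u 2 ≠ 0) (hv : v 2 ≠ 0) (hw : w 2 ≠ 0) :
    D3 (invIota u) (invIota v) (invIota w) = Ddet u v w / (u 2 * v 2 * w 2) := by
  simp only [D3, invIota, Ddet]; field_simp; ring

private lemma Ddet_mulVec (h : Matrix (Fin 3) (Fin 3) ℝ) (u v w : Fin 3 → ℝ) :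
    Ddet (h.mulVec u) (h.mulVec v) (h.mulVec w) = h.det * Ddet u v w := by
  simp only [Ddet, Matrix.mulVec, dotProduct, Fin.sum_univ_three, Matrix.det_fin_three]
  ring

private lemma Ddet_iota (p q r : Pt) :
    Ddet (iota p) (iota q) (iota r) =
      ((Real.sqrt (p.1 ^ 2 + p.2 ^ 2 + 1))⁻¹ * (Real.sqrt (q.1 ^ 2 + q.2 ^ 2 + 1))⁻¹ *
        (Real.sqrt (r.1 ^ 2 + r.2 ^ 2 + 1))⁻¹) * D3 p q r := by
  simp only [Ddet, iota, D3, Pi.smul_apply, Matrix.cons_val_zero, Matrix.cons_val_one,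
    Matrix.head_cons, Matrix.cons_val_two, Matrix.tail_cons, smul_eq_mul]
  ring

private lemma sqrt_pos' (p : Pt) : 0 < Real.sqrt (p.1 ^ 2 + p.2 ^ 2 + 1) :=
  Real.sqrt_pos.2 (by positivity)

/-- chi is preserved by the spherical transform formula. -/
private lemma chi_transform {A : Matrix (Fin 2) (Fin 2) ℝ} {c : Pt}
    {h : Matrix (Fin 3) (Fin 3) ℝ} (hA : 0 < A.det) (hdet : h.det = 1)
    {p q r : Pt} (hp : 0 < h.mulVec (iota p) 2) (hq : 0 < h.mulVec (iota q) 2)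
    (hr : 0 < h.mulVec (iota r) 2) :
    chi (affApply A c (invIota (h.mulVec (iota p))))
        (affApply A c (invIota (h.mulVec (iota q))))
        (affApply A c (invIota (h.mulVec (iota r)))) = chi p q r := by
  rw [chi_eq_sign, chi_eq_sign, D3_aff, D3_invIota _ _ _ hp.ne' hq.ne' hr.ne',
    Ddet_mulVec, hdet, one_mul, Ddet_iota]
  have hc : 0 < A.det *
      (((Real.sqrt (p.1 ^ 2 + p.2 ^ 2 + 1))⁻¹ * (Real.sqrt (q.1 ^ 2 + q.2 ^ 2 + 1))⁻¹ *
        (Real.sqrt (r.1 ^ 2 + r.2 ^ 2 + 1))⁻¹) /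
        (h.mulVec (iota p) 2 * h.mulVec (iota q) 2 * h.mulVec (iota r) 2)) := by
    have := sqrt_pos' p; have := sqrt_pos' q; have := sqrt_pos' r
    positivity
  calc Real.sign (A.det * ((_ * D3 p q r) / _))
      = Real.sign ((A.det * (_ / _)) * D3 p q r) := by ring_nf
    _ = Real.sign (D3 p q r) := sign_pos_mul hc _

private lemma aff_inj {A : Matrix (Fin 2) (Fin 2) ℝ} (hA : A.det ≠ 0) (c : Pt) {x y : Pt}
    (hxy : affApply A c x = affApply A c y) : x = y := by
  rw [Matrix.det_fin_two] at hA
  have h1 : A 0 0 * x.1 + A 0 1 * x.2 = A 0 0 * y.1 + A 0 1 * y.2 := by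
    have := congrArg Prod.fst hxy; simp only [affApply] at this; linarith
  have h2 : A 1 0 * x.1 + A 1 1 * x.2 = A 1 0 * y.1 + A 1 1 * y.2 := by
    have := congrArg Prod.snd hxy; simp only [affApply] at this; linarith
  have e1 : x.1 = y.1 := by
    have : (A 0 0 * A 1 1 - A 0 1 * A 1 0) * (x.1 - y.1) = 0 := by
      linear_combination A 1 1 * h1 - A 0 1 * h2
    rcases mul_eq_zero.1 this with h | h
    · exact absurd h hA
    · linarith
  have e2 : x.2 = y.2 := by
    have : (A 0 0 * A 1 1 - A 0 1 * A 1 0) * (x.2 - y.2) = 0 := by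
      linear_combination A 0 0 * h2 - A 1 0 * h1
    rcases mul_eq_zero.1 this with h | h
    · exact absurd h hA
    · linarith
  exact Prod.ext e1 e2

private lemma norm_sq_iota (p : Pt) : (iota p 0)^2 + (iota p 1)^2 + (iota p 2)^2 = 1 := by
  simp only [iota, Pi.smul_apply, Matrix.cons_val_zero, Matrix.cons_val_one, Matrix.head_cons,
    Matrix.cons_val_two, Matrix.tail_cons, smul_eq_mul]
  have h := sqrt_pos' p
  have h2 : Real.sqrt (p.1 ^ 2 + p.2 ^ 2 + 1) ^ 2 = p.1 ^ 2 + p.2 ^ 2 + 1 :=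
    Real.sq_sqrt (by positivity)
  field_simp
  linarith

private lemma norm_sq_mulVec {h : Matrix (Fin 3) (Fin 3) ℝ} (horth : h.transpose * h = 1)
    (u : Fin 3 → ℝ) :
    (h.mulVec u 0)^2 + (h.mulVec u 1)^2 + (h.mulVec u 2)^2 = (u 0)^2 + (u 1)^2 + (u 2)^2 := by
  have e : ∀ i j : Fin 3, (h.transpose * h) i j = (1 : Matrix (Fin 3) (Fin 3) ℝ) i j := by
    intro i j; rw [horth]
  have e00 := e 0 0; have e11 := e 1 1; have e22 := e 2 2
  have e01 := e 0 1; have e02 := e 0 2; have e12 := e 1 2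
  simp only [Matrix.mul_apply, Matrix.transpose_apply, Fin.sum_univ_three, Matrix.one_apply,
    if_true, if_false, Fin.ext_iff] at e00 e11 e22 e01 e02 e12
  norm_num at e00 e11 e22 e01 e02 e12
  simp only [Matrix.mulVec, dotProduct, Fin.sum_univ_three]
  linear_combination (u 0)^2 * e00 + (u 1)^2 * e11 + (u 2)^2 * e22 +
    2 * u 0 * u 1 * e01 + 2 * u 0 * u 2 * e02 + 2 * u 1 * u 2 * e12

private lemma invIota_inj {u v : Fin 3 → ℝ}
    (hu1 : (u 0)^2 + (u 1)^2 + (u 2)^2 = 1) (hv1 : (v 0)^2 + (v 1)^2 + (v 2)^2 = 1)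
    (hu : 0 < u 2) (hv : 0 < v 2) (heq : invIota u = invIota v) : u = v := by
  have h0 : u 0 / u 2 = v 0 / v 2 := congrArg Prod.fst heq
  have h1 : u 1 / u 2 = v 1 / v 2 := congrArg Prod.snd heq
  have hu2 := hu.ne'
  have hv2 := hv.ne'
  rw [div_eq_div_iff hu2 hv2] at h0 h1
  have key : (u 2 - v 2) * (u 2 + v 2) = 0 := by
    linear_combination v 2 ^ 2 * hu1 - u 2 ^ 2 * hv1 - (u 0 * v 2 + v 0 * u 2) * h0 -
      (u 1 * v 2 + v 1 * u 2) * h1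
  have h22 : u 2 = v 2 := by
    rcases mul_eq_zero.1 key with hk | hk
    · linarith
    · linarith
  funext i
  fin_cases i
  · have : u 0 * v 2 = v 0 * u 2 := h0
    rw [h22] at this
    exact mul_right_cancel₀ hv2 this
  · have : u 1 * v 2 = v 1 * u 2 := h1
    rw [h22] at this
    exact mul_right_cancel₀ hv2 this
  · exact h22

private lemma mulVec_inj {h : Matrix (Fin 3) (Fin 3) ℝ} (horth : h.transpose * h = 1)
    {u v : Fin 3 → ℝ} (heq : h.mulVec u = h.mulVec v) : u = v := by
  have : h.transpose.mulVec (h.mulVec u) = h.transpose.mulVec (h.mulVec v) := by rw [heq]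
  rwa [Matrix.mulVec_mulVec, Matrix.mulVec_mulVec, horth, Matrix.one_mulVec,
    Matrix.one_mulVec] at this

private lemma invIota_iota (p : Pt) : invIota (iota p) = p := by
  have h := (sqrt_pos' p).ne'
  simp only [invIota, iota, Pi.smul_apply, Matrix.cons_val_zero, Matrix.cons_val_one,
    Matrix.head_cons, Matrix.cons_val_two, Matrix.tail_cons, smul_eq_mul, mul_one]
  rw [mul_div_assoc]
  field_simp

/-- A spherical transform is injective on its domain. -/
private lemma sph_inj {f : Pt → Pt} {X : Set Pt} (hsph : IsSphericalTransformOn f X)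
    {p q : Pt} (hp : p ∈ X) (hq : q ∈ X) (hfpq : f p = f q) : p = q := by
  obtain ⟨A, c, h, hA, horth, hdet, hup, heq⟩ := hsph
  rw [heq p hp, heq q hq] at hfpq
  have h1 := aff_inj hA.ne' c hfpq
  have h2 := invIota_inj (by rw [norm_sq_mulVec horth]; exact norm_sq_iota p)
    (by rw [norm_sq_mulVec horth]; exact norm_sq_iota q) (hup p hp) (hup q hq) h1
  have h3 := mulVec_inj horth h2
  have := congrArg invIota h3
  rwa [invIota_iota, invIota_iota] at this

/-- A spherical transform preserves chi on its domain. -/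
private lemma sph_chi {f : Pt → Pt} {X : Set Pt} (hsph : IsSphericalTransformOn f X)
    {p q r : Pt} (hp : p ∈ X) (hq : q ∈ X) (hr : r ∈ X) :
    chi (f p) (f q) (f r) = chi p q r := by
  obtain ⟨A, c, h, hA, horth, hdet, hup, heq⟩ := hsph
  rw [heq p hp, heq q hq, heq r hr]
  exact chi_transform hA hdet (hup p hp) (hup q hq) (hup r hr)

private lemma measurable_realSign : Measurable Real.sign := by
  have : Real.sign = fun r : ℝ => if r < 0 then (-1 : ℝ) else if 0 < r then 1 else 0 :=
    funext fun r => rfl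
  rw [this]
  exact Measurable.ite (measurableSet_lt measurable_id measurable_const) measurable_const
    (Measurable.ite (measurableSet_lt measurable_const measurable_id) measurable_const
      measurable_const)

private lemma measurable_chiP {n : ℕ} (i j k : Fin n) :
    Measurable fun P : Fin n → Pt => chi (P i) (P j) (P k) := by
  have hm : Measurable fun P : Fin n → Pt =>
      ((P j).1 - (P i).1) * ((P k).2 - (P i).2) - ((P j).2 - (P i).2) * ((P k).1 - (P i).1) := by
    fun_prop
  exact measurable_realSign.comp hm

private lemma measurableSet_sameOT {n : ℕ} (R : Fin n → Pt) :
    MeasurableSet {P : Fin n → Pt | sameOT P R} := by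
  have : {P : Fin n → Pt | sameOT P R} = ⋃ σ : Equiv.Perm (Fin n),
      ⋂ i, ⋂ j, ⋂ k, {P : Fin n → Pt |
        chi (P i) (P j) (P k) = chi (R (σ i)) (R (σ j)) (R (σ k))} := by
    ext P
    simp only [Set.mem_setOf_eq, Set.mem_iUnion, Set.mem_iInter, sameOT]
  rw [this]
  refine MeasurableSet.iUnion fun σ => MeasurableSet.iInter fun i =>
    MeasurableSet.iInter fun j => MeasurableSet.iInter fun k => ?_
  exact (measurable_chiP i j k) (measurableSet_singleton _)

private lemma measurableSet_inGenPos {n : ℕ} :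
    MeasurableSet {P : Fin n → Pt | InGenPos P} := by
  have hinj : MeasurableSet {P : Fin n → Pt | Function.Injective P} := by
    have : {P : Fin n → Pt | Function.Injective P} =
        ⋂ i, ⋂ j, {P : Fin n → Pt | i = j ∨ P i ≠ P j} := by
      ext P
      simp only [Set.mem_setOf_eq, Set.mem_iInter]
      constructor
      · intro hP i j
        by_cases h : i = j
        · exact Or.inl h
        · exact Or.inr fun he => h (hP he)
      · intro hP x y hxy
        rcases hP x y with h | h
        · exact h
        · exact absurd hxy h
    rw [this]
    refine MeasurableSet.iInter fun i => MeasurableSet.iInter fun j => ?_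
    rcases eq_or_ne i j with h | h
    · simp [h]
    · have : {P : Fin n → Pt | i = j ∨ P i ≠ P j} = {P : Fin n → Pt | P i ≠ P j} := by
        ext P; simp [h]
      rw [this]
      have hm : Measurable fun P : Fin n → Pt => (P i, P j) :=
        (measurable_pi_apply i).prodMk (measurable_pi_apply j)
      have : {P : Fin n → Pt | P i ≠ P j} =
          (fun P : Fin n → Pt => (P i, P j)) ⁻¹' (Set.diagonal Pt)ᶜ := by
        ext P; simp [Set.diagonal]
      rw [this]
      exact hm (isClosed_diagonal.measurableSet.compl)
  have hchi : MeasurableSet {P : Fin n → Pt |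
      ∀ i j k : Fin n, i ≠ j → j ≠ k → i ≠ k → chi (P i) (P j) (P k) ≠ 0} := by
    have : {P : Fin n → Pt | ∀ i j k : Fin n, i ≠ j → j ≠ k → i ≠ k →
        chi (P i) (P j) (P k) ≠ 0} =
        ⋂ i, ⋂ j, ⋂ k, {P : Fin n → Pt | i ≠ j → j ≠ k → i ≠ k →
          chi (P i) (P j) (P k) ≠ 0} := by
      ext P; simp only [Set.mem_setOf_eq, Set.mem_iInter]
    rw [this]
    refine MeasurableSet.iInter fun i => MeasurableSet.iInter fun j =>
      MeasurableSet.iInter fun k => ?_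
    by_cases hd : i ≠ j ∧ j ≠ k ∧ i ≠ k
    · have : {P : Fin n → Pt | i ≠ j → j ≠ k → i ≠ k → chi (P i) (P j) (P k) ≠ 0} =
          (fun P : Fin n → Pt => chi (P i) (P j) (P k)) ⁻¹' {0}ᶜ := by
        ext P; simp [hd.1, hd.2.1, hd.2.2]
      rw [this]
      exact (measurable_chiP i j k) (measurableSet_singleton _).compl
    · have : {P : Fin n → Pt | i ≠ j → j ≠ k → i ≠ k → chi (P i) (P j) (P k) ≠ 0} =
          Set.univ := by
        ext P
        simp only [Set.mem_setOf_eq, Set.mem_univ, iff_true]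
        intro h1 h2 h3
        exact absurd ⟨h1, h2, h3⟩ hd
      rw [this]
      exact MeasurableSet.univ
  have : {P : Fin n → Pt | InGenPos P} =
      {P : Fin n → Pt | Function.Injective P} ∩ {P : Fin n → Pt |
        ∀ i j k : Fin n, i ≠ j → j ≠ k → i ≠ k → chi (P i) (P j) (P k) ≠ 0} := rfl
  rw [this]
  exact hinj.inter hchi

private lemma realizes_iff {n : ℕ} (P : Fin n → Pt) (ω : PtOrderType n) :
    RealizesOT P ω ↔ InGenPos P ∧ sameOT P (realization ω) := by
  constructor
  · rintro ⟨hgp, rfl⟩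
    refine ⟨hgp, ?_⟩
    have h2 : Quotient.mk (OTSetoid n)
        (Quotient.out (Quotient.mk (OTSetoid n) ⟨P, hgp⟩)) =
        Quotient.mk (OTSetoid n) ⟨P, hgp⟩ := Quotient.out_eq _
    have h3 := Quotient.exact h2
    exact (OTSetoid n).iseqv.symm h3
  · rintro ⟨hgp, hs⟩
    refine ⟨hgp, ?_⟩
    rw [← Quotient.out_eq ω]
    exact Quotient.sound hs

private lemma measurableSet_OTSet {n : ℕ} (ω : PtOrderType n) :
    MeasurableSet (OTSet ω) := by
  have : OTSet ω = {P : Fin n → Pt | InGenPos P} ∩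
      {P : Fin n → Pt | sameOT P (realization ω)} := by
    ext P
    simp only [OTSet, Set.mem_setOf_eq, Set.mem_inter_iff, realizes_iff]
  rw [this]
  exact measurableSet_inGenPos.inter (measurableSet_sameOT _)

private lemma isOpen_compl_msupport (μ : Measure Pt) : IsOpen (msupport μ)ᶜ := by
  rw [isOpen_iff_forall_mem_open]
  intro x hx
  simp only [Set.mem_compl_iff, msupport, Set.mem_setOf_eq, not_forall] at hx
  obtain ⟨U, hU, hxU, hμU⟩ := hx
  refine ⟨U, fun y hy => ?_, hU, hxU⟩
  simp only [Set.mem_compl_iff, msupport, Set.mem_setOf_eq, not_forall]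
  exact ⟨U, hU, hy, hμU⟩

private lemma compl_msupport_null (μ : Measure Pt) : μ (msupport μ)ᶜ = 0 := by
  have hcover : (msupport μ)ᶜ = ⋃₀ {U : Set Pt | IsOpen U ∧ μ U = 0} := by
    ext x
    simp only [Set.mem_compl_iff, msupport, Set.mem_setOf_eq, not_forall, Set.mem_sUnion]
    constructor
    · rintro ⟨U, hU, hxU, hμU⟩
      exact ⟨U, ⟨hU, by simpa [not_lt, le_zero_iff] using hμU⟩, hxU⟩
    · rintro ⟨U, ⟨hU, hμU⟩, hxU⟩
      exact ⟨U, hU, hxU, by simp [hμU]⟩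
  obtain ⟨T, hTc, hTsub, hTeq⟩ := TopologicalSpace.isOpen_sUnion_countable
    {U : Set Pt | IsOpen U ∧ μ U = 0} (fun U hU => hU.1)
  rw [hcover, ← hTeq]
  exact (measure_sUnion_null_iff hTc).2 fun U hU => (hTsub hU).2

end Aux

theorem stmt_6 (μ : Measure Pt) [IsFiniteMeasure μ] (hpos : 0 < μ Set.univ)
    (hline : ChargesNoLine μ) (f : Pt → Pt) (hf : Measurable f)
    (hsph : IsSphericalTransformOn f (msupport μ)) :
    ∀ (n : ℕ) (ω : PtOrderType n), ellMu ω μ = ellMu ω (Measure.map f μ) := by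
  intro n ω
  have hμuniv_ne : μ Set.univ ≠ 0 := hpos.ne'
  have hmapuniv : Measure.map f μ Set.univ = μ Set.univ := by
    rw [Measure.map_apply hf MeasurableSet.univ, Set.preimage_univ]
  have hnorm : mnormalize (Measure.map f μ) = Measure.map f (mnormalize μ) := by
    simp only [mnormalize]
    rw [hmapuniv, Measure.map_smul]
  have hF : MeasurePreserving (fun (P : Fin n → Pt) i => f (P i))
      (Measure.pi fun _ : Fin n => mnormalize μ)
      (Measure.pi fun _ : Fin n => mnormalize (Measure.map f μ)) := by
    rw [hnorm]
    exact measurePreserving_pi _ _ fun _ => ⟨hf, rfl⟩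
  set X := msupport μ with hX
  set π := Measure.pi fun _ : Fin n => mnormalize μ with hπ
  have hXnull : mnormalize μ Xᶜ = 0 := by
    simp [mnormalize, compl_msupport_null μ, hX]
  have hSnull : π {P : Fin n → Pt | ¬ ∀ i, P i ∈ X} = 0 := by
    have hU : {P : Fin n → Pt | ¬ ∀ i, P i ∈ X} =
        ⋃ i, (fun P : Fin n → Pt => P i) ⁻¹' Xᶜ := by
      ext P; simp
    rw [hU]
    refine measure_iUnion_null fun i => ?_
    have hset : (fun P : Fin n → Pt => P i) ⁻¹' Xᶜ =
        Set.pi Set.univ (fun j => if j = i then Xᶜ else Set.univ) := by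
      ext P
      simp only [Set.mem_preimage, Set.mem_pi, Set.mem_univ, forall_true_left]
      constructor
      · intro h j
        by_cases hj : j = i
        · subst hj; simp [h]
        · simp [hj]
      · intro h
        have := h i
        simpa using this
    rw [hset, hπ, Measure.pi_pi]
    exact Finset.prod_eq_zero (Finset.mem_univ i) (by simp [hXnull])
  have hkey : ∀ P : Fin n → Pt, (∀ i, P i ∈ X) →
      (P ∈ OTSet ω ↔ (fun i => f (P i)) ∈ OTSet ω) := by
    intro P hP
    have hchi : ∀ i j k : Fin n, chi (f (P i)) (f (P j)) (f (P k)) = chi (P i) (P j) (P k) :=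
      fun i j k => sph_chi hsph (hP i) (hP j) (hP k)
    have hinj : Function.Injective P ↔ Function.Injective (fun i => f (P i)) := by
      constructor
      · intro h i j hij
        exact h (sph_inj hsph (hP i) (hP j) hij)
      · intro h i j hij
        exact h (congrArg f hij)
    simp only [OTSet, Set.mem_setOf_eq, realizes_iff]
    constructor
    · rintro ⟨⟨hinj1, hchi1⟩, σ, hσ⟩
      exact ⟨⟨hinj.1 hinj1, fun i j k h1 h2 h3 => by
          rw [hchi]; exact hchi1 i j k h1 h2 h3⟩,
        σ, fun i j k => by rw [hchi]; exact hσ i j k⟩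
    · rintro ⟨⟨hinj1, hchi1⟩, σ, hσ⟩
      refine ⟨⟨hinj.2 hinj1, fun i j k h1 h2 h3 => ?_⟩, σ, fun i j k => ?_⟩
      · have := hchi1 i j k h1 h2 h3
        rwa [hchi] at this
      · rw [← hchi]; exact hσ i j k
  have hOT := measurableSet_OTSet ω
  have hmap : (Measure.pi fun _ : Fin n => mnormalize (Measure.map f μ)) (OTSet ω)
      = π ((fun (P : Fin n → Pt) i => f (P i)) ⁻¹' OTSet ω) := by
    rw [← hF.map_eq, Measure.map_apply hF.measurable hOT]
  have hae : ((fun (P : Fin n → Pt) i => f (P i)) ⁻¹' OTSet ω) =ᵐ[π] (OTSet ω) := by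
    rw [MeasureTheory.ae_eq_set]
    constructor
    · refine measure_mono_null ?_ hSnull
      intro P hP
      simp only [Set.mem_diff, Set.mem_preimage] at hP
      simp only [Set.mem_setOf_eq]
      intro hall
      exact hP.2 ((hkey P hall).2 hP.1)
    · refine measure_mono_null ?_ hSnull
      intro P hP
      simp only [Set.mem_diff, Set.mem_preimage] at hP
      simp only [Set.mem_setOf_eq]
      intro hall
      exact hP.2 ((hkey P hall).1 hP.1)
  rw [ellMu, ellMu, hmap, measure_congr hae]

end
end

section
/- Let μ be a finite Borel measure on ℝ² whose support has non-empty interior. Then for any two distinct points a, b ∈ supp μ, the set {(y,z) ∈ ℝ² × ℝ² : χ(a,y,z) ≠ χ(b,y,z)} has positive μ⊗μ-measure; in other words, the kernel (supp μ, μ, χ) is twin-free. -/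
open MeasureTheory Filter Topology
open scoped ENNReal NNReal

noncomputable section

/-- Existence of a point near `c` that is not on the line through `a` and `b`. -/
lemma exists_off_line (a b c : Pt) (hab : a ≠ b) (ε : ℝ) (hε : 0 < ε) :
    ∃ w : Pt, dist w c < ε ∧
      (w.1 - a.1) * (b.2 - a.2) - (w.2 - a.2) * (b.1 - a.1) ≠ 0 := by
  have hne : b.1 - a.1 ≠ 0 ∨ b.2 - a.2 ≠ 0 := by
    by_contra hcc
    push_neg at hcc
    exact hab (Prod.ext (by linarith [hcc.1]) (by linarith [hcc.2])).symm
  by_cases h : (c.1 - a.1) * (b.2 - a.2) - (c.2 - a.2) * (b.1 - a.1) ≠ 0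
  · exact ⟨c, by simpa using hε, h⟩
  · push_neg at h
    have hsum : 0 < |b.2 - a.2| + |b.1 - a.1| := by
      rcases hne with h' | h'
      · have : 0 < |b.1 - a.1| := abs_pos.2 h'
        have := abs_nonneg (b.2 - a.2)
        linarith
      · have : 0 < |b.2 - a.2| := abs_pos.2 h'
        have := abs_nonneg (b.1 - a.1)
        linarith
    set s : ℝ := ε / (2 * (|b.2 - a.2| + |b.1 - a.1|)) with hs
    have hs0 : 0 < s := by positivity
    refine ⟨(c.1 - s * (b.2 - a.2), c.2 + s * (b.1 - a.1)), ?_, ?_⟩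
    · rw [Prod.dist_eq]
      have e1 : dist (c.1 - s * (b.2 - a.2)) c.1 = s * |b.2 - a.2| := by
        rw [Real.dist_eq]
        rw [show c.1 - s * (b.2 - a.2) - c.1 = -(s * (b.2 - a.2)) by ring]
        rw [abs_neg, abs_mul, abs_of_pos hs0]
      have e2 : dist (c.2 + s * (b.1 - a.1)) c.2 = s * |b.1 - a.1| := by
        rw [Real.dist_eq]
        rw [show c.2 + s * (b.1 - a.1) - c.2 = s * (b.1 - a.1) by ring]
        rw [abs_mul, abs_of_pos hs0]
      have key : s * (|b.2 - a.2| + |b.1 - a.1|) = ε / 2 := by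
        rw [hs]; field_simp
      have b1 : s * |b.2 - a.2| ≤ ε / 2 := by nlinarith [abs_nonneg (b.1 - a.1)]
      have b2 : s * |b.1 - a.1| ≤ ε / 2 := by nlinarith [abs_nonneg (b.2 - a.2)]
      simp only [e1, e2]
      exact max_lt (by linarith) (by linarith)
    · simp only
      have expand : (c.1 - s * (b.2 - a.2) - a.1) * (b.2 - a.2) -
          (c.2 + s * (b.1 - a.1) - a.2) * (b.1 - a.1)
          = ((c.1 - a.1) * (b.2 - a.2) - (c.2 - a.2) * (b.1 - a.1))
            - s * ((b.2 - a.2) ^ 2 + (b.1 - a.1) ^ 2) := by ring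
      rw [expand, h, zero_sub]
      have hsq : 0 < (b.2 - a.2) ^ 2 + (b.1 - a.1) ^ 2 := by
        rcases hne with h' | h'
        · positivity
        · positivity
      exact neg_ne_zero.2 (mul_ne_zero hs0.ne' hsq.ne')

set_option maxHeartbeats 1000000 in
theorem stmt_12 (μ : Measure Pt) [IsFiniteMeasure μ]
    (hi : (interior (msupport μ)).Nonempty) :
    ∀ a ∈ msupport μ, ∀ b ∈ msupport μ, a ≠ b →
      0 < (μ.prod μ) {p : Pt × Pt | chi a p.1 p.2 ≠ chi b p.1 p.2} := by
  intro a _ b _ hab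
  obtain ⟨c, hc⟩ := hi
  obtain ⟨ε, hε, hball⟩ := Metric.isOpen_iff.1 isOpen_interior c hc
  have hball' : Metric.ball c ε ⊆ msupport μ := hball.trans interior_subset
  obtain ⟨w, hwc, hD⟩ := exists_off_line a b c hab ε hε
  obtain ⟨D, hDdef⟩ : ∃ D : ℝ, D = (w.1 - a.1) * (b.2 - a.2) - (w.2 - a.2) * (b.1 - a.1) :=
    ⟨_, rfl⟩
  rw [← hDdef] at hD
  obtain ⟨m1, m2, hm1, hm2⟩ : ∃ m1 m2 : ℝ, m1 = (a.1 + b.1) / 2 ∧ m2 = (a.2 + b.2) / 2 :=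
    ⟨_, _, rfl, rfl⟩
  have hden : 0 < |m1 - w.1| + |m2 - w.2| + 1 := by positivity
  obtain ⟨t, ht, hkey⟩ : ∃ t : ℝ, 0 < t ∧
      t * (|m1 - w.1| + |m2 - w.2| + 1) = (ε - dist w c) / 2 := by
    refine ⟨(ε - dist w c) / (2 * (|m1 - w.1| + |m2 - w.2| + 1)),
      div_pos (by linarith) (by linarith), ?_⟩
    field_simp
  obtain ⟨z, hz1, hz2⟩ : ∃ z : Pt, z.1 = w.1 + t * (m1 - w.1) ∧ z.2 = w.2 + t * (m2 - w.2) :=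
    ⟨(_, _), rfl, rfl⟩
  have hzball : z ∈ Metric.ball c ε := by
    have h1 : dist z w < ε - dist w c := by
      rw [Prod.dist_eq]
      have e1 : dist z.1 w.1 = t * |m1 - w.1| := by
        rw [hz1, Real.dist_eq, show w.1 + t * (m1 - w.1) - w.1 = t * (m1 - w.1) by ring,
          abs_mul, abs_of_pos ht]
      have e2 : dist z.2 w.2 = t * |m2 - w.2| := by
        rw [hz2, Real.dist_eq, show w.2 + t * (m2 - w.2) - w.2 = t * (m2 - w.2) by ring,
          abs_mul, abs_of_pos ht]
      have b1 : t * |m1 - w.1| ≤ (ε - dist w c) / 2 := by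
        nlinarith [abs_nonneg (m2 - w.2)]
      have b2 : t * |m2 - w.2| ≤ (ε - dist w c) / 2 := by
        nlinarith [abs_nonneg (m1 - w.1)]
      rw [e1, e2]
      exact max_lt (by linarith) (by linarith)
    have := dist_triangle z w c
    exact Metric.mem_ball.2 (by linarith)
  have hwball : w ∈ Metric.ball c ε := Metric.mem_ball.2 hwc
  obtain ⟨s, hs, hF0, hG0⟩ : ∃ s : ℝ, s ≠ 0 ∧
      (w.1 - a.1) * (z.2 - a.2) - (w.2 - a.2) * (z.1 - a.1) = s ∧
      (w.1 - b.1) * (z.2 - b.2) - (w.2 - b.2) * (z.1 - b.1) = -s := by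
    refine ⟨t * D / 2, div_ne_zero (mul_ne_zero ht.ne' hD) two_ne_zero, ?_, ?_⟩
    · rw [hz1, hz2, hm1, hm2, hDdef]; ring
    · rw [hz1, hz2, hm1, hm2, hDdef]; ring
  have hcF : Continuous fun p : Pt × Pt =>
      s * ((p.1.1 - a.1) * (p.2.2 - a.2) - (p.1.2 - a.2) * (p.2.1 - a.1)) := by fun_prop
  have hcG : Continuous fun p : Pt × Pt =>
      s * ((p.1.1 - b.1) * (p.2.2 - b.2) - (p.1.2 - b.2) * (p.2.1 - b.1)) := by fun_prop
  have hO : IsOpen {p : Pt × Pt |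
      0 < s * ((p.1.1 - a.1) * (p.2.2 - a.2) - (p.1.2 - a.2) * (p.2.1 - a.1)) ∧
      s * ((p.1.1 - b.1) * (p.2.2 - b.2) - (p.1.2 - b.2) * (p.2.1 - b.1)) < 0} :=
    (isOpen_lt continuous_const hcF).inter (isOpen_lt hcG continuous_const)
  have hmemO : (w, z) ∈ {p : Pt × Pt |
      0 < s * ((p.1.1 - a.1) * (p.2.2 - a.2) - (p.1.2 - a.2) * (p.2.1 - a.1)) ∧
      s * ((p.1.1 - b.1) * (p.2.2 - b.2) - (p.1.2 - b.2) * (p.2.1 - b.1)) < 0} := by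
    constructor
    · show 0 < s * ((w.1 - a.1) * (z.2 - a.2) - (w.2 - a.2) * (z.1 - a.1))
      rw [hF0]
      exact mul_self_pos.2 hs
    · show s * ((w.1 - b.1) * (z.2 - b.2) - (w.2 - b.2) * (z.1 - b.1)) < 0
      rw [hG0, mul_neg]
      have := mul_self_pos.2 hs
      linarith
  have hOsub : {p : Pt × Pt |
      0 < s * ((p.1.1 - a.1) * (p.2.2 - a.2) - (p.1.2 - a.2) * (p.2.1 - a.1)) ∧
      s * ((p.1.1 - b.1) * (p.2.2 - b.2) - (p.1.2 - b.2) * (p.2.1 - b.1)) < 0} ⊆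
      {p : Pt × Pt | chi a p.1 p.2 ≠ chi b p.1 p.2} := by
    rintro p ⟨h1, h2⟩
    rcases hs.lt_or_gt with hneg | hpos
    · have hFp : (p.1.1 - a.1) * (p.2.2 - a.2) - (p.1.2 - a.2) * (p.2.1 - a.1) < 0 := by
        nlinarith
      have hGp : 0 < (p.1.1 - b.1) * (p.2.2 - b.2) - (p.1.2 - b.2) * (p.2.1 - b.1) := by
        nlinarith
      show chi a p.1 p.2 ≠ chi b p.1 p.2
      unfold chi
      rw [Real.sign_of_neg hFp, Real.sign_of_pos hGp]
      norm_num
    · have hFp : 0 < (p.1.1 - a.1) * (p.2.2 - a.2) - (p.1.2 - a.2) * (p.2.1 - a.1) := by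
        nlinarith
      have hGp : (p.1.1 - b.1) * (p.2.2 - b.2) - (p.1.2 - b.2) * (p.2.1 - b.1) < 0 := by
        nlinarith
      show chi a p.1 p.2 ≠ chi b p.1 p.2
      unfold chi
      rw [Real.sign_of_pos hFp, Real.sign_of_neg hGp]
      norm_num
  obtain ⟨r, hr, hrO⟩ := Metric.isOpen_iff.1 hO (w, z) hmemO
  have hprodsub : Metric.ball w r ×ˢ Metric.ball z r ⊆
      {p : Pt × Pt | chi a p.1 p.2 ≠ chi b p.1 p.2} := by
    rw [ball_prod_same]
    exact hrO.trans hOsub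
  have hw : 0 < μ (Metric.ball w r) :=
    hball' hwball _ Metric.isOpen_ball (Metric.mem_ball_self hr)
  have hz : 0 < μ (Metric.ball z r) :=
    hball' hzball _ Metric.isOpen_ball (Metric.mem_ball_self hr)
  calc (0 : ℝ≥0∞) < μ (Metric.ball w r) * μ (Metric.ball z r) :=
        ENNReal.mul_pos hw.ne' hz.ne'
    _ = μ.prod μ (Metric.ball w r ×ˢ Metric.ball z r) := (Measure.prod_prod _ _).symm
    _ ≤ _ := measure_mono hprodsub

end
end

section
/- Let k ≥ 4 and let N ≥ k be an integer such that every set of N points in general position in ℝ² contains k points in convex position. Then every limit of order types ℓ satisfies ℓ(◇_k) ≥ 1/C(N,k). -/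
open MeasureTheory Filter Topology
open scoped ENNReal NNReal

noncomputable section

namespace OTAux

def det3 (p q r : Pt) : ℝ := (q.1 - p.1) * (r.2 - p.2) - (q.2 - p.2) * (r.1 - p.1)

lemma chi_eq (p q r : Pt) : chi p q r = Real.sign (det3 p q r) := rfl

lemma det3_cyc (p q r : Pt) : det3 q r p = det3 p q r := by unfold det3; ring

def detC (z w : ℂ) : ℝ := z.re * w.im - z.im * w.re

lemma detC_sin (z w : ℂ) :
    detC z w = ‖z‖ * ‖w‖ * Real.sin (w.arg - z.arg) := by
  unfold detC
  rw [Real.sin_sub, ← Complex.norm_mul_cos_arg z, ← Complex.norm_mul_sin_arg z,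
    ← Complex.norm_mul_cos_arg w, ← Complex.norm_mul_sin_arg w]
  ring

lemma detC_expand (A B C : ℂ) :
    detC (B - A) (C - A) = detC A B + detC B C + detC C A := by
  unfold detC; simp only [Complex.sub_re, Complex.sub_im]; ring

lemma cramer (A C B : ℂ) (h : detC A C ≠ 0) :
    B = (detC B C / detC A C) • A + (detC A B / detC A C) • C := by
  apply Complex.ext <;>
  · simp only [Complex.add_re, Complex.add_im, Complex.smul_re, Complex.smul_im, smul_eq_mul]
    unfold detC at h ⊢
    rw [div_mul_eq_mul_div, div_mul_eq_mul_div, ← add_div, eq_div_iff h]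
    ring

lemma coreCCW (A B C : ℂ) (hAB : 0 < detC A B) (hBC : 0 < detC B C) (hAC : 0 < detC A C)
    (hext : ∀ α γ : ℝ, 0 < α → 0 < γ → α + γ ≤ 1 → B ≠ α • A + γ • C) :
    0 < detC (B - A) (C - A) := by
  have hB := cramer A C B (ne_of_gt hAC)
  set α := detC B C / detC A C with hα
  set γ := detC A B / detC A C with hγ
  have hα0 : 0 < α := div_pos hBC hAC
  have hγ0 : 0 < γ := div_pos hAB hAC
  have hgt : 1 < α + γ := by
    by_contra h
    exact hext α γ hα0 hγ0 (le_of_not_gt h) hB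
  have hcalc : detC (B - A) (C - A) = (α + γ - 1) * detC A C := by
    rw [hB]
    unfold detC
    simp only [Complex.sub_re, Complex.sub_im, Complex.add_re, Complex.add_im,
      Complex.smul_re, Complex.smul_im, smul_eq_mul]
    ring
  rw [hcalc]
  exact mul_pos (by linarith) hAC

def fC (p : Pt) : ℂ := ⟨p.1, p.2⟩

@[simp] lemma fC_re (p : Pt) : (fC p).re = p.1 := rfl
@[simp] lemma fC_im (p : Pt) : (fC p).im = p.2 := rfl

lemma fC_inj : Function.Injective fC := by
  intro a b h
  have h1 := congrArg Complex.re h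
  have h2 := congrArg Complex.im h
  simp only [fC_re, fC_im] at h1 h2
  exact Prod.ext h1 h2

lemma det3_eq_detC (p q r : Pt) :
    det3 p q r = detC (fC q - fC p) (fC r - fC p) := by
  unfold det3 detC
  simp only [Complex.sub_re, Complex.sub_im, fC_re, fC_im]

lemma smul_of_arg_eq {z w : ℂ} (hz : z ≠ 0) (hw : w ≠ 0) (h : z.arg = w.arg) :
    z = ((‖z‖ / ‖w‖) : ℝ) • w := by
  apply Complex.ext_norm_arg
  · rw [Complex.real_smul, norm_mul, Complex.norm_real, Real.norm_eq_abs,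
      abs_of_nonneg (div_nonneg (norm_nonneg z) (norm_nonneg w))]
    rw [div_mul_cancel₀ _ (norm_ne_zero_iff.mpr hw)]
  · rw [Complex.real_smul,
      Complex.arg_real_mul w (div_pos (norm_pos_iff.mpr hz) (norm_pos_iff.mpr hw)), h]

lemma canon_exists {k : ℕ} (hk : 2 ≤ k) (X : Fin k → Pt) (hinj : Function.Injective X)
    (hcp : ConvexPosSet (Set.range X)) :
    ∃ σ : Equiv.Perm (Fin k), ∀ i j l : Fin k, i < j → j < l →
      chi (X (σ i)) (X (σ j)) (X (σ l)) = 1 := by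
  classical
  obtain ⟨hgp, hext⟩ := hcp
  set H := convexHull ℝ (Set.range X) with hH
  have hXH : ∀ i, X i ∈ H := fun i => subset_convexHull ℝ _ ⟨i, rfl⟩
  have hKconv : ∀ i, Convex ℝ (H \ {X i}) := fun i =>
    ((convex_convexHull ℝ (Set.range X)).mem_extremePoints_iff_convex_diff.mp
      (hext (X i) ⟨i, rfl⟩)).2
  have hkpos : 0 < k := by omega
  have hk0 : (0:ℝ) < (k:ℝ) := by exact_mod_cast hkpos
  have hk2 : (2:ℝ) ≤ (k:ℝ) := by exact_mod_cast hk
  set m : Pt := (k : ℝ)⁻¹ • ∑ i, X i with hm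
  -- m is in the hull
  have hmH : m ∈ H := by
    have hcm : (Finset.univ : Finset (Fin k)).centerMass (fun _ => (1:ℝ)) X = m := by
      rw [Finset.centerMass]
      simp [Finset.card_univ, hm]
    rw [← hcm]
    exact Finset.centerMass_mem_convexHull _ (fun i _ => zero_le_one)
      (by simp only [Finset.sum_const, Finset.card_univ, Fintype.card_fin, nsmul_eq_mul,
        mul_one]; exact_mod_cast hk0) (fun i _ => ⟨i, rfl⟩)
  -- m is none of the points
  have hmX : ∀ i, m ≠ X i := by
    intro i heq
    have hsum : ∑ j, X j = (k:ℝ) • X i := by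
      have h1 : (k:ℝ) • m = ∑ j, X j := by
        rw [hm, smul_smul, mul_inv_cancel₀ (ne_of_gt hk0), one_smul]
      rw [← h1, heq]
    have hsum' : ∑ j ∈ Finset.univ.erase i, X j = ((k:ℝ) - 1) • X i := by
      rw [Finset.sum_erase_eq_sub (Finset.mem_univ i), hsum, sub_smul, one_smul]
    have hcard : (Finset.univ.erase i).card = k - 1 := by
      simp [Finset.card_erase_of_mem]
    have hk1 : ((k - 1 : ℕ) : ℝ) = (k:ℝ) - 1 := by
      have : 1 ≤ k := by omega
      push_cast [Nat.cast_sub this]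
      ring
    have hcm2 : (Finset.univ.erase i).centerMass (fun _ => (1:ℝ)) X = X i := by
      rw [Finset.centerMass]
      simp only [Finset.sum_const, hcard, nsmul_eq_mul, mul_one, one_smul, hsum', hk1]
      rw [smul_smul, inv_mul_cancel₀ (by intro h; linarith [hk2] : (k:ℝ) - 1 ≠ 0), one_smul]
    have hmem : X i ∈ convexHull ℝ (Set.range X \ {X i}) := by
      have hmem0 : (Finset.univ.erase i).centerMass (fun _ => (1:ℝ)) X ∈
          convexHull ℝ (Set.range X \ {X i}) := by
        refine Finset.centerMass_mem_convexHull _ (fun j _ => zero_le_one) ?_ ?_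
        · simp only [Finset.sum_const, hcard, nsmul_eq_mul, mul_one, hk1]
          linarith [hk2]
        · intro j hj
          exact ⟨⟨j, rfl⟩, fun h => (Finset.ne_of_mem_erase hj)
            (hinj (Set.mem_singleton_iff.mp h))⟩
      rwa [hcm2] at hmem0
    have hsub : convexHull ℝ (Set.range X \ {X i}) ⊆ H \ {X i} :=
      convexHull_min (fun x hx => ⟨subset_convexHull ℝ _ hx.1, hx.2⟩) (hKconv i)
    exact (hsub hmem).2 rfl
  -- no point on an open segment between another point and m
  have hseg : ∀ i j : Fin k, i ≠ j → ∀ r : ℝ, 0 < r → r < 1 →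
      X i ≠ r • X j + (1 - r) • m := by
    intro i j hij r hr0 hr1 heq
    have hXjK : X j ∈ H \ {X i} := ⟨hXH j, fun h => hij (hinj h).symm⟩
    have hmK : m ∈ H \ {X i} := ⟨hmH, fun h => hmX i h⟩
    have hmem := (hKconv i) hXjK hmK (a := r) (b := 1 - r) (le_of_lt hr0) (by linarith)
      (by ring)
    rw [← heq] at hmem
    exact hmem.2 rfl
  set W : Fin k → ℂ := fun i => fC (X i) - fC m with hW
  have hWne : ∀ i, W i ≠ 0 := by
    intro i h
    rw [hW] at h
    simp only [sub_eq_zero] at h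
    exact hmX i (fC_inj h).symm
  have habs : ∀ i, 0 < ‖W i‖ := fun i => norm_pos_iff.mpr (hWne i)
  -- arguments are pairwise distinct
  have hkey : ∀ a b : Fin k, a ≠ b → (W a).arg = (W b).arg →
      ‖W a‖ ≤ ‖W b‖ → False := by
    intro a b hab harg hle
    set r : ℝ := ‖W a‖ / ‖W b‖ with hr
    have hr0 : 0 < r := div_pos (habs a) (habs b)
    have hr1 : r ≤ 1 := (div_le_one (habs b)).mpr hle
    have hWab : W a = (r : ℝ) • W b := by
      rw [hr]
      exact smul_of_arg_eq (hWne a) (hWne b) harg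
    have hXab : X a = r • X b + (1 - r) • m := by
      have hre := congrArg Complex.re hWab
      have him := congrArg Complex.im hWab
      simp only [hW, Complex.sub_re, Complex.sub_im, Complex.smul_re, Complex.smul_im,
        smul_eq_mul, fC_re, fC_im] at hre him
      refine Prod.ext ?_ ?_
      · simp only [Prod.fst_add, Prod.smul_fst, smul_eq_mul]
        linarith
      · simp only [Prod.snd_add, Prod.smul_snd, smul_eq_mul]
        linarith
    rcases lt_or_eq_of_le hr1 with hlt | heq1
    · exact hseg a b hab r hr0 hlt hXab
    · rw [heq1, one_smul, sub_self, zero_smul, add_zero] at hXab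
      exact hab (hinj hXab)
  have harginj : Function.Injective (fun i => (W i).arg) := by
    intro a b h
    by_contra hab
    rcases le_total ‖W a‖ ‖W b‖ with hle | hle
    · exact hkey a b hab h hle
    · exact hkey b a (Ne.symm hab) h.symm hle
  -- general position in triple form
  have hgp3 : ∀ a b c : Fin k, a ≠ b → b ≠ c → a ≠ c → det3 (X a) (X b) (X c) ≠ 0 := by
    intro a b c hab hbc hac h0
    have := hgp (X a) (X b) (X c) ⟨a, rfl⟩ ⟨b, rfl⟩ ⟨c, rfl⟩
      (fun h => hab (hinj h)) (fun h => hbc (hinj h)) (fun h => hac (hinj h))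
    rw [chi_eq, h0, Real.sign_zero] at this
    exact this rfl
  -- det3 in terms of W
  have hdet3W : ∀ a b c : Fin k,
      det3 (X a) (X b) (X c) = detC (W b - W a) (W c - W a) := by
    intro a b c
    rw [det3_eq_detC]
    congr 1 <;> (rw [hW]; ring)
  -- the cone lemma
  have hcone : ∀ a b c : Fin k, a ≠ b → b ≠ c → a ≠ c →
      0 < detC (W a) (W b) → 0 < detC (W b) (W c) → 0 < detC (W a) (W c) →
      0 < det3 (X a) (X b) (X c) := by
    intro a b c hab hbc hac hAB hBC hAC
    rw [hdet3W]
    refine coreCCW (W a) (W b) (W c) hAB hBC hAC ?_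
    intro α γ hα hγ hαγ hBeq
    have hXb : X b = α • X a + γ • X c + (1 - α - γ) • m := by
      have hre := congrArg Complex.re hBeq
      have him := congrArg Complex.im hBeq
      simp only [hW, Complex.add_re, Complex.add_im, Complex.sub_re, Complex.sub_im,
        Complex.smul_re, Complex.smul_im, smul_eq_mul, fC_re, fC_im] at hre him
      refine Prod.ext ?_ ?_
      · simp only [Prod.fst_add, Prod.smul_fst, smul_eq_mul]
        linarith
      · simp only [Prod.snd_add, Prod.smul_snd, smul_eq_mul]
        linarith
    have hmem : (Finset.univ : Finset (Fin 3)).sum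
        (fun t => (![α, γ, 1 - α - γ] t) • (![X a, X c, m] t)) ∈ H \ {X b} := by
      refine (hKconv b).sum_mem ?_ ?_ ?_
      · intro t _
        fin_cases t <;> simp <;> linarith
      · rw [Fin.sum_univ_three]
        simp only [Matrix.cons_val_zero, Matrix.cons_val_one, Matrix.head_cons,
          Matrix.cons_val_two, Matrix.tail_cons]
        ring
      · have hma : X a ∈ H \ {X b} := ⟨hXH a, fun h => hab (hinj (Set.mem_singleton_iff.mp h))⟩
        have hmc : X c ∈ H \ {X b} :=
          ⟨hXH c, fun h => hbc (hinj (Set.mem_singleton_iff.mp h)).symm⟩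
        have hmm : m ∈ H \ {X b} := ⟨hmH, fun h => hmX b (Set.mem_singleton_iff.mp h)⟩
        intro t _
        fin_cases t
        · simpa using hma
        · simpa using hmc
        · simpa using hmm
    rw [Fin.sum_univ_three] at hmem
    simp only [Matrix.cons_val_zero, Matrix.cons_val_one, Matrix.head_cons,
      Matrix.cons_val_two, Matrix.tail_cons] at hmem
    rw [← hXb] at hmem
    exact hmem.2 rfl
  -- positivity helpers
  have hdpos : ∀ a b : Fin k, 0 < Real.sin ((W b).arg - (W a).arg) →
      0 < detC (W a) (W b) := by
    intro a b h
    rw [detC_sin]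
    exact mul_pos (mul_pos (habs a) (habs b)) h
  have hdnn : ∀ a b : Fin k, 0 ≤ Real.sin ((W b).arg - (W a).arg) →
      0 ≤ detC (W a) (W b) := by
    intro a b h
    rw [detC_sin]
    positivity
  -- sorting by argument
  set σ := Tuple.sort (fun i => (W i).arg) with hσ
  have hmono : StrictMono (fun i => (W (σ i)).arg) :=
    (Tuple.monotone_sort (fun i => (W i).arg)).strictMono_of_injective
      (harginj.comp σ.injective)
  refine ⟨σ, ?_⟩
  intro i j l hij hjl
  set a := σ i
  set b := σ j
  set c := σ l
  have hab : a ≠ b := fun h => (ne_of_lt hij) (σ.injective h)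
  have hbc : b ≠ c := fun h => (ne_of_lt hjl) (σ.injective h)
  have hac : a ≠ c := fun h => (ne_of_lt (lt_trans hij hjl)) (σ.injective h)
  have h1 : (W a).arg < (W b).arg := hmono hij
  have h2 : (W b).arg < (W c).arg := hmono hjl
  set x := (W b).arg - (W a).arg with hx
  set y := (W c).arg - (W b).arg with hy
  have hx0 : 0 < x := by simp [hx]; linarith
  have hy0 : 0 < y := by simp [hy]; linarith
  have hxy2 : x + y < 2 * Real.pi := by
    have ha1 : -Real.pi < (W a).arg := Complex.neg_pi_lt_arg _
    have hc1 : (W c).arg ≤ Real.pi := Complex.arg_le_pi _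
    simp [hx, hy]
    linarith
  have hsum_ac : (W c).arg - (W a).arg = x + y := by rw [hx, hy]; ring
  have hsum_ca : (W a).arg - (W c).arg = (2 * Real.pi - (x + y)) - 2 * Real.pi := by
    rw [hx, hy]; ring
  have hsum_ba : (W a).arg - (W b).arg = (2 * Real.pi - x) - 2 * Real.pi := by
    rw [hx]; ring
  have hsum_cb : (W b).arg - (W c).arg = (2 * Real.pi - y) - 2 * Real.pi := by
    rw [hy]; ring
  have hpi : 0 < Real.pi := Real.pi_pos
  rw [chi_eq]
  rcases lt_or_ge Real.pi x with hxpi | hxpi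
  · -- case C2 : use (b, c, a)
    have hd1 : 0 < detC (W b) (W c) :=
      hdpos _ _ (Real.sin_pos_of_pos_of_lt_pi hy0 (by linarith))
    have hd2 : 0 < detC (W c) (W a) := by
      refine hdpos _ _ ?_
      rw [hsum_ca, Real.sin_sub_two_pi]
      exact Real.sin_pos_of_pos_of_lt_pi (by linarith) (by linarith)
    have hd3 : 0 < detC (W b) (W a) := by
      refine hdpos _ _ ?_
      rw [hsum_ba, Real.sin_sub_two_pi]
      exact Real.sin_pos_of_pos_of_lt_pi (by linarith) (by linarith)
    have := hcone b c a hbc (Ne.symm hac) (Ne.symm hab) hd1 hd2 hd3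
    rw [det3_cyc] at this
    exact Real.sign_of_pos this
  · rcases lt_or_ge Real.pi y with hypi | hypi
    · -- case C3 : use (c, a, b)
      have hd1 : 0 < detC (W c) (W a) := by
        refine hdpos _ _ ?_
        rw [hsum_ca, Real.sin_sub_two_pi]
        exact Real.sin_pos_of_pos_of_lt_pi (by linarith) (by linarith)
      have hd2 : 0 < detC (W a) (W b) :=
        hdpos _ _ (Real.sin_pos_of_pos_of_lt_pi hx0 (by linarith))
      have hd3 : 0 < detC (W c) (W b) := by
        refine hdpos _ _ ?_
        rw [hsum_cb, Real.sin_sub_two_pi]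
        exact Real.sin_pos_of_pos_of_lt_pi (by linarith) (by linarith)
      have := hcone c a b (Ne.symm hac) hab (Ne.symm hbc) hd1 hd2 hd3
      rw [det3_cyc, det3_cyc] at this
      exact Real.sign_of_pos this
    · rcases lt_or_ge (x + y) Real.pi with hxypi | hxypi
      · -- case C1 : use (a, b, c)
        have hd1 : 0 < detC (W a) (W b) :=
          hdpos _ _ (Real.sin_pos_of_pos_of_lt_pi hx0 (by linarith))
        have hd2 : 0 < detC (W b) (W c) :=
          hdpos _ _ (Real.sin_pos_of_pos_of_lt_pi hy0 (by linarith))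
        have hd3 : 0 < detC (W a) (W c) := by
          refine hdpos _ _ ?_
          rw [hsum_ac]
          exact Real.sin_pos_of_pos_of_lt_pi (by linarith) hxypi
        exact Real.sign_of_pos (hcone a b c hab hbc hac hd1 hd2 hd3)
      · -- case C4 : origin inside the triangle
        have hd1 : 0 ≤ detC (W a) (W b) :=
          hdnn _ _ (Real.sin_nonneg_of_nonneg_of_le_pi (le_of_lt hx0) hxpi)
        have hd2 : 0 ≤ detC (W b) (W c) :=
          hdnn _ _ (Real.sin_nonneg_of_nonneg_of_le_pi (le_of_lt hy0) hypi)
        have hd3 : 0 ≤ detC (W c) (W a) := by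
          refine hdnn _ _ ?_
          rw [hsum_ca, Real.sin_sub_two_pi]
          exact Real.sin_nonneg_of_nonneg_of_le_pi (by linarith) (by linarith)
        have hsum : det3 (X a) (X b) (X c) =
            detC (W a) (W b) + detC (W b) (W c) + detC (W c) (W a) := by
          rw [hdet3W, detC_expand]
        have hne := hgp3 a b c hab hbc hac
        have hpos : 0 < det3 (X a) (X b) (X c) := by
          rcases lt_or_eq_of_le (by rw [hsum]; linarith :
            (0:ℝ) ≤ det3 (X a) (X b) (X c)) with h | h
          · exact h
          · exact absurd h.symm hne
        exact Real.sign_of_pos hpos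

end OTAux
namespace OTAux

lemma det3_swap (p q r : Pt) : det3 p r q = - det3 p q r := by unfold det3; ring
lemma det3_swap' (p q r : Pt) : det3 q p r = - det3 p q r := by unfold det3; ring

lemma chi_cyc (p q r : Pt) : chi q r p = chi p q r := by rw [chi_eq, chi_eq, det3_cyc]
lemma chi_swap (p q r : Pt) : chi p r q = - chi p q r := by
  rw [chi_eq, chi_eq, det3_swap, Real.sign_neg]
lemma chi_swap' (p q r : Pt) : chi q p r = - chi p q r := by
  rw [chi_eq, chi_eq, det3_swap', Real.sign_neg]

lemma chi_dup₁ (p r : Pt) : chi p p r = 0 := by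
  rw [chi_eq]
  unfold det3
  rw [show (p.1 - p.1) * (r.2 - p.2) - (p.2 - p.2) * (r.1 - p.1) = 0 by ring, Real.sign_zero]
lemma chi_dup₂ (p q : Pt) : chi p q p = 0 := by
  rw [chi_eq]
  unfold det3
  rw [show (q.1 - p.1) * (p.2 - p.2) - (q.2 - p.2) * (p.1 - p.1) = 0 by ring, Real.sign_zero]
lemma chi_dup₃ (p q : Pt) : chi p q q = 0 := by
  rw [chi_eq]
  unfold det3
  rw [show (q.1 - p.1) * (q.2 - p.2) - (q.2 - p.2) * (q.1 - p.1) = 0 by ring, Real.sign_zero]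

lemma chi_congr_of_canon {k : ℕ} (P Q : Fin k → Pt)
    (hP : ∀ i j l : Fin k, i < j → j < l → chi (P i) (P j) (P l) = 1)
    (hQ : ∀ i j l : Fin k, i < j → j < l → chi (Q i) (Q j) (Q l) = 1) :
    ∀ i j l : Fin k, chi (P i) (P j) (P l) = chi (Q i) (Q j) (Q l) := by
  have key : ∀ (R : Fin k → Pt), (∀ a b c : Fin k, a < b → b < c →
      chi (R a) (R b) (R c) = 1) → ∀ a b c : Fin k, a < b → b < c →
      chi (R a) (R b) (R c) = 1 ∧ chi (R a) (R c) (R b) = -1 ∧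
      chi (R b) (R a) (R c) = -1 ∧ chi (R b) (R c) (R a) = 1 ∧
      chi (R c) (R a) (R b) = 1 ∧ chi (R c) (R b) (R a) = -1 := by
    intro R hR a b c hab hbc
    have h1 := hR a b c hab hbc
    have h4 : chi (R b) (R c) (R a) = 1 := by rw [chi_cyc, h1]
    have h5 : chi (R c) (R a) (R b) = 1 := by rw [chi_cyc, h4]
    refine ⟨h1, ?_, ?_, h4, h5, ?_⟩
    · rw [chi_swap, h1]
    · rw [chi_swap', h1]
    · rw [chi_swap', h4]
  intro i j l
  rcases eq_or_ne i j with rfl | hij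
  · rw [chi_dup₁, chi_dup₁]
  rcases eq_or_ne j l with rfl | hjl
  · rw [chi_dup₃, chi_dup₃]
  rcases eq_or_ne i l with rfl | hil
  · rw [chi_dup₂, chi_dup₂]
  rcases lt_trichotomy i j with h1 | h1 | h1
  · rcases lt_trichotomy j l with h2 | h2 | h2
    · rw [(key P hP i j l h1 h2).1, (key Q hQ i j l h1 h2).1]
    · exact absurd h2 hjl
    · rcases lt_trichotomy i l with h3 | h3 | h3
      · rw [(key P hP i l j h3 h2).2.1, (key Q hQ i l j h3 h2).2.1]
      · exact absurd h3 hil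
      · rw [(key P hP l i j h3 h1).2.2.2.1, (key Q hQ l i j h3 h1).2.2.2.1]
  · exact absurd h1 hij
  · rcases lt_trichotomy i l with h2 | h2 | h2
    · rw [(key P hP j i l h1 h2).2.2.1, (key Q hQ j i l h1 h2).2.2.1]
    · exact absurd h2 hil
    · rcases lt_trichotomy j l with h3 | h3 | h3
      · rw [(key P hP j l i h3 h2).2.2.2.2.1, (key Q hQ j l i h3 h2).2.2.2.2.1]
      · exact absurd h3 hjl
      · rw [(key P hP l j i h3 h1).2.2.2.2.2, (key Q hQ l j i h3 h1).2.2.2.2.2]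

lemma sameOT_of_convexPos {k : ℕ} (hk : 2 ≤ k) (P Q : Fin k → Pt)
    (hPinj : Function.Injective P) (hQinj : Function.Injective Q)
    (hPc : ConvexPosSet (Set.range P)) (hQc : ConvexPosSet (Set.range Q)) :
    sameOT P Q := by
  obtain ⟨σP, hP⟩ := canon_exists hk P hPinj hPc
  obtain ⟨σQ, hQ⟩ := canon_exists hk Q hQinj hQc
  refine ⟨σP.symm.trans σQ, fun i j l => ?_⟩
  have := chi_congr_of_canon (fun i => P (σP i)) (fun i => Q (σQ i)) hP hQ
    (σP.symm i) (σP.symm j) (σP.symm l)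
  simpa using this

lemma inGenPos_of_convexPos {k : ℕ} (X : Fin k → Pt) (hinj : Function.Injective X)
    (h : ConvexPosSet (Set.range X)) : InGenPos X :=
  ⟨hinj, fun i j l hij hjl hil => h.1 _ _ _ ⟨i, rfl⟩ ⟨j, rfl⟩ ⟨l, rfl⟩
    (fun e => hij (hinj e)) (fun e => hjl (hinj e)) (fun e => hil (hinj e))⟩

lemma inGenPos_comp {N n : ℕ} (Q : Fin n → Pt) (h : InGenPos Q) (t : Fin N ↪ Fin n) :
    InGenPos (fun i => Q (t i)) :=
  ⟨h.1.comp t.injective, fun i j l hij hjl hil => h.2 _ _ _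
    (fun e => hij (t.injective e)) (fun e => hjl (t.injective e))
    (fun e => hil (t.injective e))⟩

lemma descFactorial_split (n a b : ℕ) :
    n.descFactorial (a + b) = n.descFactorial a * (n - a).descFactorial b := by
  induction b with
  | zero => simp
  | succ b ih =>
    rw [show a + (b + 1) = (a + b) + 1 by ring, Nat.descFactorial_succ, ih,
      Nat.descFactorial_succ, ← Nat.sub_sub]
    ring

lemma density_lower {k N n : ℕ} (hk2 : 2 ≤ k) (hkN : k ≤ N) (hNn : N ≤ n)
    (hES : ∀ P : Fin N → Pt, InGenPos P →
      ∃ s : Finset (Fin N), s.card = k ∧ ConvexPosSet (P '' ↑s))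
    (ω : PtOrderType k) (ω' : PtOrderType n)
    (hconv : ConvexPosSet (Set.range (realization ω))) :
    1 / (N.choose k : ℝ) ≤ density ω ω' := by
  classical
  have hRgen : InGenPos (realization ω) := (Quotient.out ω).2
  have hQgen : InGenPos (realization ω') := (Quotient.out ω').2
  set R : Fin k → Pt := realization ω with hR
  set Q : Fin n → Pt := realization ω' with hQdef
  set Good : Finset (Fin k ↪ Fin n) :=
    Finset.univ.filter (fun s => sameOT R (fun i => Q (s i))) with hGood
  -- every N-embedding contains many good k-embeddings
  have keyA : ∀ t : Fin N ↪ Fin n, ∃ u : Fin k ↪ Fin N,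
      ∀ π : Equiv.Perm (Fin k), (π.toEmbedding.trans u).trans t ∈ Good := by
    intro t
    have hQt : InGenPos (fun i => Q (t i)) := inGenPos_comp Q hQgen t
    obtain ⟨c, hcard, hconvc⟩ := hES _ hQt
    refine ⟨(c.orderEmbOfFin hcard).toEmbedding, fun π => ?_⟩
    rw [hGood, Finset.mem_filter]
    refine ⟨Finset.mem_univ _, ?_⟩
    set Y : Fin k → Pt := fun i => Q (t (c.orderEmbOfFin hcard (π i))) with hY
    have hYinj : Function.Injective Y :=
      hQgen.1.comp (t.injective.comp ((c.orderEmbOfFin hcard).injective.comp π.injective))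
    have hrange : Set.range Y = (fun i => Q (t i)) '' ↑c := by
      ext p
      constructor
      · rintro ⟨i, rfl⟩
        exact ⟨c.orderEmbOfFin hcard (π i), Finset.orderEmbOfFin_mem c hcard _, rfl⟩
      · rintro ⟨x, hx, rfl⟩
        have hx' : x ∈ Set.range (c.orderEmbOfFin hcard) := by
          rw [Finset.range_orderEmbOfFin]
          exact_mod_cast hx
        obtain ⟨ix, hix⟩ := hx'
        exact ⟨π.symm ix, by simp [hY, hix]⟩
    have hYcp : ConvexPosSet (Set.range Y) := by rw [hrange]; exact hconvc
    exact sameOT_of_convexPos hk2 R Y hRgen.1 hYinj hconv hYcp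
  choose uu huu using keyA
  set F : (Fin N ↪ Fin n) × (Fin k ↪ Fin N) → (Fin k ↪ Fin n) :=
    fun p => p.2.trans p.1 with hF
  set Pairs : Finset ((Fin N ↪ Fin n) × (Fin k ↪ Fin N)) :=
    Finset.univ.filter (fun p => F p ∈ Good) with hPairs
  -- lower bound on Pairs
  have hlow : n.descFactorial N * Nat.factorial k ≤ Pairs.card := by
    have hinj2 : ∀ p : (Fin N ↪ Fin n) × Equiv.Perm (Fin k),
        (p.1, p.2.toEmbedding.trans (uu p.1)) ∈ Pairs := by
      intro p
      rw [hPairs, Finset.mem_filter]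
      exact ⟨Finset.mem_univ _, huu p.1 p.2⟩
    have hcard : (Finset.univ : Finset ((Fin N ↪ Fin n) × Equiv.Perm (Fin k))).card ≤
        Pairs.card := by
      apply Finset.card_le_card_of_injOn (fun p => (p.1, p.2.toEmbedding.trans (uu p.1)))
        (fun p _ => hinj2 p)
      rintro ⟨t1, π1⟩ - ⟨t2, π2⟩ - heq
      simp only [Prod.mk.injEq] at heq
      obtain ⟨ht, hu⟩ := heq
      subst ht
      have hππ : π1 = π2 := by
        apply Equiv.ext
        intro i
        have h := DFunLike.congr_fun hu i
        simp only [Function.Embedding.trans_apply, Equiv.coe_toEmbedding] at h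
        exact (uu t1).injective h
      rw [hππ]
    calc n.descFactorial N * Nat.factorial k
        = (Finset.univ : Finset ((Fin N ↪ Fin n) × Equiv.Perm (Fin k))).card := by
          simp [Finset.card_univ, Fintype.card_prod, Fintype.card_embedding_eq,
            Fintype.card_perm]
      _ ≤ Pairs.card := hcard
  -- upper bound on Pairs
  have hup : Pairs.card ≤ ((n - k).descFactorial (N - k) * N.descFactorial k) * Good.card := by
    apply Finset.card_le_mul_card_image_of_maps_to (f := F) (t := Good)
    · intro p hp
      rw [hPairs, Finset.mem_filter] at hp
      exact hp.2
    · intro s _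
      have hsub : Finset.filter (fun p => F p = s) Pairs ⊆
          Finset.univ.filter (fun p => F p = s) :=
        Finset.filter_subset_filter _ (Finset.subset_univ _)
      refine le_trans (Finset.card_le_card hsub) ?_
      have hcards : Fintype.card
          ({x // x ∈ ((Finset.univ : Finset (Fin k)).map s)ᶜ}) = n - k := by
        rw [Fintype.card_coe, Finset.card_compl, Finset.card_map, Finset.card_univ,
          Fintype.card_fin, Fintype.card_fin]
      have hinner : ∀ u : Fin k ↪ Fin N,
          (Finset.univ.filter
            (fun p : (Fin N ↪ Fin n) × (Fin k ↪ Fin N) => F p = s ∧ p.2 = u)).card ≤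
          (n - k).descFactorial (N - k) := by
        intro u
        rw [← Fintype.card_subtype]
        have hcardT : Fintype.card
            ({x // x ∈ ((Finset.univ : Finset (Fin k)).map u)ᶜ} ↪
             {y // y ∈ ((Finset.univ : Finset (Fin k)).map s)ᶜ}) =
            (n - k).descFactorial (N - k) := by
          rw [Fintype.card_embedding_eq, hcards, Fintype.card_coe, Finset.card_compl,
            Finset.card_map, Finset.card_univ, Fintype.card_fin, Fintype.card_fin]
        rw [← hcardT]
        have hf : ∀ (q : {p : (Fin N ↪ Fin n) × (Fin k ↪ Fin N) // F p = s ∧ p.2 = u})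
            (x : {x // x ∈ ((Finset.univ : Finset (Fin k)).map u)ᶜ}),
            q.1.1 x.1 ∈ ((Finset.univ : Finset (Fin k)).map s)ᶜ := by
          rintro ⟨⟨t1, u1⟩, hs1, hu1⟩ ⟨x, hx⟩
          simp only at hs1 hu1
          rw [Finset.mem_compl, Finset.mem_map]
          rintro ⟨i, -, hi⟩
          have hsi : t1 (u i) = s i := by
            have e1 := DFunLike.congr_fun hs1 i
            simp only [hF, Function.Embedding.trans_apply] at e1
            rw [hu1] at e1
            exact e1
          have hux : u i = x := t1.injective (by rw [hsi, hi])
          rw [Finset.mem_compl] at hx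
          exact hx (by rw [← hux]; exact Finset.mem_map_of_mem _ (Finset.mem_univ i))
        apply Fintype.card_le_of_injective
          (fun q => ⟨fun x => ⟨q.1.1 x.1, hf q x⟩, fun x y hxy =>
            Subtype.ext (q.1.1.injective (congrArg Subtype.val hxy))⟩)
        rintro ⟨⟨t1, u1⟩, hs1, hu1⟩ ⟨⟨t2, u2⟩, hs2, hu2⟩ hq
        simp only at hu1 hu2 hs1 hs2
        have ht : t1 = t2 := by
          apply DFunLike.ext
          intro x
          by_cases hx : x ∈ (Finset.univ : Finset (Fin k)).map u
          · rw [Finset.mem_map] at hx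
            obtain ⟨i, -, rfl⟩ := hx
            have e1 := DFunLike.congr_fun hs1 i
            have e2 := DFunLike.congr_fun hs2 i
            simp only [hF, Function.Embedding.trans_apply] at e1 e2
            rw [hu1] at e1
            rw [hu2] at e2
            rw [e1, e2]
          · have hxc : x ∈ ((Finset.univ : Finset (Fin k)).map u)ᶜ := Finset.mem_compl.mpr hx
            have := congrArg (fun (e : {x // x ∈ ((Finset.univ : Finset (Fin k)).map u)ᶜ} ↪
                {y // y ∈ ((Finset.univ : Finset (Fin k)).map s)ᶜ}) => (e ⟨x, hxc⟩).1) hq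
            exact this
        exact Subtype.ext (by rw [Prod.ext_iff]; exact ⟨ht, hu1.trans hu2.symm⟩)
      calc (Finset.univ.filter
            (fun p : (Fin N ↪ Fin n) × (Fin k ↪ Fin N) => F p = s)).card
          ≤ (n - k).descFactorial (N - k) * (Finset.univ : Finset (Fin k ↪ Fin N)).card := by
            apply Finset.card_le_mul_card_image_of_maps_to (f := Prod.snd)
              (fun p _ => Finset.mem_univ _)
            intro u _
            refine le_trans (Finset.card_le_card ?_) (hinner u)
            intro p hp
            simp only [Finset.mem_filter] at hp ⊢
            exact ⟨Finset.mem_univ _, hp.1.2, hp.2⟩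
        _ = (n - k).descFactorial (N - k) * N.descFactorial k := by
            simp [Finset.card_univ, Fintype.card_embedding_eq]
  -- combine the counts
  have hDpos : 0 < (n - k).descFactorial (N - k) :=
    Nat.pos_of_ne_zero (fun h0 =>
      (by omega : ¬ (n - k) < (N - k)) (Nat.descFactorial_eq_zero_iff_lt.mp h0))
  have hsplit : n.descFactorial N = n.descFactorial k * (n - k).descFactorial (N - k) := by
    calc n.descFactorial N = n.descFactorial (k + (N - k)) := by
          rw [Nat.add_sub_cancel' hkN]
      _ = n.descFactorial k * (n - k).descFactorial (N - k) := descFactorial_split n k (N - k)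
  have hmain : n.descFactorial k ≤ N.choose k * Good.card := by
    have h1 : n.descFactorial k * ((n - k).descFactorial (N - k) * Nat.factorial k)
        ≤ (N.choose k * Good.card) * ((n - k).descFactorial (N - k) * Nat.factorial k) := by
      calc n.descFactorial k * ((n - k).descFactorial (N - k) * Nat.factorial k)
          = n.descFactorial N * Nat.factorial k := by rw [hsplit]; ring
        _ ≤ Pairs.card := hlow
        _ ≤ ((n - k).descFactorial (N - k) * N.descFactorial k) * Good.card := hup
        _ = (N.choose k * Good.card) * ((n - k).descFactorial (N - k) * Nat.factorial k) := by
            rw [Nat.descFactorial_eq_factorial_mul_choose N k]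
            ring
    exact Nat.le_of_mul_le_mul_right h1 (Nat.mul_pos hDpos (Nat.factorial_pos k))
  -- conclude
  have hcard_emb : Nat.card (Fin k ↪ Fin n) = n.descFactorial k := by
    rw [Nat.card_eq_fintype_card, Fintype.card_embedding_eq, Fintype.card_fin, Fintype.card_fin]
  have hcard_good : Nat.card {s : Fin k ↪ Fin n // sameOT R (fun i => Q (s i))} = Good.card := by
    rw [Nat.card_eq_fintype_card, hGood, Fintype.card_subtype]
  have hd0 : 0 < n.descFactorial k :=
    Nat.pos_of_ne_zero (fun h0 =>
      (by omega : ¬ n < k) (Nat.descFactorial_eq_zero_iff_lt.mp h0))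
  have hc0 : 0 < N.choose k := Nat.choose_pos hkN
  unfold density
  rw [← hR, ← hQdef, hcard_good, hcard_emb]
  rw [div_le_div_iff₀ (by exact_mod_cast hc0) (by exact_mod_cast hd0)]
  rw [one_mul]
  calc (n.descFactorial k : ℝ) ≤ ((N.choose k * Good.card : ℕ) : ℝ) := by exact_mod_cast hmain
    _ = (Good.card : ℝ) * (N.choose k : ℝ) := by push_cast; ring

end OTAux

theorem stmt_18 (k N : ℕ) (hk : 4 ≤ k) (hkN : k ≤ N)
    (hES : ∀ P : Fin N → Pt, InGenPos P →
      ∃ s : Finset (Fin N), s.card = k ∧ ConvexPosSet (P '' ↑s))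
    (ℓ : OT → ℝ) (hℓ : IsOTLimit ℓ) :
    ∀ ω : PtOrderType k, ConvexPosSet (Set.range (realization ω)) →
      1 / (N.choose k : ℝ) ≤ ℓ ⟨k, ω⟩ := by
  intro ω hconv
  obtain ⟨ωs, hsize, hlim⟩ := hℓ
  have hk2 : 2 ≤ k := by omega
  refine ge_of_tendsto (hlim ⟨k, ω⟩) ?_
  filter_upwards [hsize.eventually_ge_atTop N] with n hn
  exact OTAux.density_lower hk2 hkN hn hES ω (ωs n).2 hconv

end
end
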